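/- arXiv:0907.2336 — 5 statements merged into one kernel-verified Lean document; each statement's English description precedes it below -/
import Mathlib

section
/- Let K be a number field that is a Galois extension of ℚ and is totally real (every embedding of K into ℂ has image contained in ℝ), and let r = [K:ℚ]. If a polynomial f ∈ ℚ[x₁,…,xₙ] is a sum of m squares of polynomials in K[x₁,…,xₙ] (i.e., the image of f under the coefficient-wise inclusion ℚ[x₁,…,xₙ] → K[x₁,…,xₙ] equals Σ_{k=1}^m f_k² for some f_k ∈ K[x₁,…,xₙ]), then f is a sum of (4r − 3)·m squares of polynomials in ℚ[x₁,…,xₙ]. -/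
open MvPolynomial Module

noncomputable def cwMap {n : ℕ} {K : Type*} [Field K] [CharZero K] (ℓ : K →ₗ[ℚ] ℚ)
    (g : MvPolynomial (Fin n) K) : MvPolynomial (Fin n) ℚ :=
  ∑ d ∈ g.support, MvPolynomial.monomial d (ℓ (MvPolynomial.coeff d g))

lemma coeff_cwMap {n : ℕ} {K : Type*} [Field K] [CharZero K] (ℓ : K →ₗ[ℚ] ℚ)
    (g : MvPolynomial (Fin n) K) (d : Fin n →₀ ℕ) :
    MvPolynomial.coeff d (cwMap ℓ g) = ℓ (MvPolynomial.coeff d g) := by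
  classical
  rw [cwMap, MvPolynomial.coeff_sum]
  simp only [MvPolynomial.coeff_monomial]
  rw [Finset.sum_ite_eq' g.support d (fun x => ℓ (MvPolynomial.coeff x g))]
  split_ifs with h
  · rfl
  · rw [MvPolynomial.notMem_support_iff.mp h, map_zero]

lemma rat_four_sq (q : ℚ) (hq : 0 ≤ q) : ∃ s : Fin 4 → ℚ, q = ∑ t, (s t) ^ 2 := by
  obtain ⟨a, b, c, d, habcd⟩ := Nat.sum_four_squares (q.num.toNat * q.den)
  refine ⟨![(a : ℚ) / q.den, (b : ℚ) / q.den, (c : ℚ) / q.den, (d : ℚ) / q.den], ?_⟩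
  have hden : (q.den : ℚ) ≠ 0 := by exact_mod_cast q.den_ne_zero
  have hnum : ((q.num.toNat : ℕ) : ℚ) = (q.num : ℚ) := by
    exact_mod_cast Int.toNat_of_nonneg (Rat.num_nonneg.mpr hq)
  have hq' : (q.num : ℚ) = q * q.den := (div_eq_iff hden).mp (Rat.num_div_den q)
  have h4 : ((a:ℚ)^2 + b^2 + c^2 + d^2) = q * q.den * q.den := by
    have := congrArg (Nat.cast (R := ℚ)) habcd
    push_cast at this
    rw [this, hnum, hq']
  rw [Fin.sum_univ_four]
  simp only [Matrix.cons_val_zero, Matrix.cons_val_one, Matrix.head_cons,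
    Matrix.cons_val_two, Matrix.tail_cons, Matrix.cons_val_three]
  rw [div_pow, div_pow, div_pow, div_pow, ← add_div, ← add_div,
    ← add_div, h4, pow_two]
  field_simp


lemma bilin_sos {V : Type*} [AddCommGroup V] [Module ℚ V] [FiniteDimensional ℚ V]
    (B : LinearMap.BilinForm ℚ V) (hsymm : ∀ x y, B x y = B y x)
    (hpsd : ∀ x, 0 ≤ B x x) :
    ∃ ℓ : Fin (finrank ℚ V) × Fin 4 → (V →ₗ[ℚ] ℚ),
      ∀ x y, B x y = ∑ j, ℓ j x * ℓ j y := by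
  classical
  obtain ⟨w, ⟨φ⟩⟩ := QuadraticForm.equivalent_weightedSumSquares B.toQuadraticMap
  have hQ : ∀ x, B x x = ∑ i, w i * (φ x i * φ x i) := by
    intro x
    have h1 := φ.map_app x
    rw [QuadraticMap.weightedSumSquares_apply] at h1
    rw [LinearMap.BilinMap.toQuadraticMap_apply] at h1
    simp only [smul_eq_mul] at h1
    rw [← h1]
  have happ : ∀ v : Fin (finrank ℚ V) → ℚ, φ (φ.symm v) = v := fun v => φ.apply_symm_apply v
  have hw : ∀ i, 0 ≤ w i := by
    intro i
    have h2 := hQ (φ.symm (Pi.single i 1))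
    rw [happ] at h2
    have h3 : ∑ j, w j * (Pi.single (M := fun _ => ℚ) i 1 j * Pi.single (M := fun _ => ℚ) i 1 j)
        = w i := by
      rw [Finset.sum_eq_single i]
      · simp
      · intro b _ hb; simp [Pi.single_apply, hb]
      · simp
    rw [h3] at h2
    rw [← h2]
    exact hpsd _
  choose s hs using fun i => rat_four_sq (w i) (hw i)
  set c : Fin (finrank ℚ V) → (V →ₗ[ℚ] ℚ) :=
    fun i => (LinearMap.proj i).comp (φ.toLinearEquiv : V →ₗ[ℚ] (Fin (finrank ℚ V) → ℚ)) with hc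
  have hcx : ∀ (x : V) (i : Fin (finrank ℚ V)), c i x = φ x i := fun x i => rfl
  have hdiag : ∀ x, B x x = ∑ i, w i * (c i x * c i x) := by
    intro x; rw [hQ x]; simp only [hcx]
  have hbilin : ∀ x y, B x y = ∑ i, w i * (c i x * c i y) := by
    intro x y
    have e1 : B (x+y) (x+y) = B x x + 2 * B x y + B y y := by
      simp only [map_add, LinearMap.add_apply]
      rw [hsymm y x]; ring
    have e2 : ∑ i, w i * (c i (x+y) * c i (x+y))
        = (∑ i, w i * (c i x * c i x)) + 2 * (∑ i, w i * (c i x * c i y))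
          + ∑ i, w i * (c i y * c i y) := by
      rw [Finset.mul_sum, ← Finset.sum_add_distrib, ← Finset.sum_add_distrib]
      refine Finset.sum_congr rfl fun i _ => ?_
      rw [map_add]; ring
    have d1 := hdiag (x+y)
    have d2 := hdiag x
    have d3 := hdiag y
    rw [e1, d2, d3] at d1
    rw [e2] at d1
    linarith
  refine ⟨fun j => s j.1 j.2 • c j.1, fun x y => ?_⟩
  rw [hbilin x y, Fintype.sum_prod_type]
  refine Finset.sum_congr rfl fun i _ => ?_
  have : ∀ t : Fin 4, (s i t • c i) x * (s i t • c i) y = s i t ^ 2 * (c i x * c i y) := by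
    intro t
    simp only [LinearMap.smul_apply, smul_eq_mul]
    ring
  rw [Finset.sum_congr rfl (fun t _ => this t), ← Finset.sum_mul, ← hs i]

lemma bilin_sos_one {V : Type*} [AddCommGroup V] [Module ℚ V] [FiniteDimensional ℚ V]
    (B : LinearMap.BilinForm ℚ V) (hsymm : ∀ x y, B x y = B y x)
    (hpsd : ∀ x, 0 ≤ B x x) (e : V) (he : B e e = 1) :
    ∃ ℓ : Option (Fin (finrank ℚ V - 1) × Fin 4) → (V →ₗ[ℚ] ℚ),
      ∀ x y, B x y = ∑ j, ℓ j x * ℓ j y := by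
  classical
  set ℓ₀ : V →ₗ[ℚ] ℚ := B.flip e with hℓ₀def
  have hℓ₀ : ∀ x, ℓ₀ x = B x e := fun x => rfl
  have hsurj : Function.Surjective ℓ₀ := by
    intro q
    exact ⟨q • e, by rw [map_smul, hℓ₀, he, smul_eq_mul, mul_one]⟩
  have hrange : LinearMap.range ℓ₀ = ⊤ := LinearMap.range_eq_top.mpr hsurj
  have hker : finrank ℚ (LinearMap.ker ℓ₀) + 1 = finrank ℚ V := by
    have h := LinearMap.finrank_range_add_finrank_ker ℓ₀
    rw [hrange] at h
    simp only [finrank_top, finrank_self] at h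
    omega
  set BW : LinearMap.BilinForm ℚ (LinearMap.ker ℓ₀) :=
    B.compl₁₂ (LinearMap.ker ℓ₀).subtype (LinearMap.ker ℓ₀).subtype with hBWdef
  have hBW : ∀ (x y : LinearMap.ker ℓ₀), BW x y = B x y := fun x y => rfl
  obtain ⟨ℓ', hℓ'⟩ := bilin_sos BW (fun x y => hsymm x y) (fun x => hpsd x)
  set π : V →ₗ[ℚ] V := LinearMap.id - ℓ₀.smulRight e with hπdef
  have hπ : ∀ x, π x = x - ℓ₀ x • e := fun x => rfl
  have hπker : ∀ x, π x ∈ LinearMap.ker ℓ₀ := by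
    intro x
    rw [LinearMap.mem_ker, hπ, map_sub, map_smul, hℓ₀ e, he, smul_eq_mul, mul_one, sub_self]
  set πW : V →ₗ[ℚ] (LinearMap.ker ℓ₀) := π.codRestrict (LinearMap.ker ℓ₀) hπker with hπWdef
  have hπW : ∀ x, ((πW x : LinearMap.ker ℓ₀) : V) = π x := fun x => rfl
  have hsplit : ∀ x y, B x y = ℓ₀ x * ℓ₀ y + B (π x) (π y) := by
    intro x y
    have expand : B (x - ℓ₀ x • e) (y - ℓ₀ y • e)
        = B x y - ℓ₀ x * B e y - ℓ₀ y * B x e + ℓ₀ x * ℓ₀ y * B e e := by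
      simp only [map_sub, map_smul, LinearMap.sub_apply, LinearMap.smul_apply, smul_eq_mul]
      ring
    rw [hπ, hπ, expand, he, ← hℓ₀ x, hsymm e y, ← hℓ₀ y]
    ring
  have hWr : finrank ℚ (LinearMap.ker ℓ₀) = finrank ℚ V - 1 := by omega
  refine ⟨fun j => Option.rec ℓ₀ (fun p => (ℓ' (finCongr hWr.symm p.1, p.2)).comp πW) j,
    fun x y => ?_⟩
  rw [hsplit x y, Fintype.sum_option]
  congr 1
  have hmain := hℓ' (πW x) (πW y)
  rw [hBW, hπW, hπW] at hmain
  rw [hmain]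
  exact Fintype.sum_equiv ((finCongr hWr.symm).prodCongr (Equiv.refl (Fin 4)))
    (fun p => ((ℓ' (finCongr hWr.symm p.1, p.2)).comp πW) x
      * ((ℓ' (finCongr hWr.symm p.1, p.2)).comp πW) y)
    (fun q => ℓ' q (πW x) * ℓ' q (πW y)) (fun p => rfl) |>.symm

lemma trace_sq_nonneg (K : Type*) [Field K] [NumberField K]
    (ht : ∀ φ : K →+* ℂ, ∀ x : K, (φ x).im = 0) (y : K) :
    0 ≤ Algebra.trace ℚ K (y * y) := by
  have h := trace_eq_sum_embeddings (K := ℚ) (L := K) ℂ (x := y * y)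
  have h2 : ∀ σ : K →ₐ[ℚ] ℂ, σ (y * y) = (((σ y).re : ℝ) ^ 2 : ℝ) := by
    intro σ
    have him : (σ y).im = 0 := ht σ.toRingHom y
    have hre : (σ y) = ((σ y).re : ℂ) := Complex.ext (by simp) (by simp [him])
    rw [map_mul, hre, ← Complex.ofReal_mul, ← pow_two, Complex.ofReal_re]
  rw [Finset.sum_congr rfl (fun σ _ => h2 σ)] at h
  have h3 := congrArg Complex.re h
  rw [eq_ratCast (algebraMap ℚ ℂ)] at h3
  rw [Complex.ratCast_re] at h3
  have h4 : (∑ σ : K →ₐ[ℚ] ℂ, (((σ y).re ^ 2 : ℝ) : ℂ)).re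
      = ∑ σ : K →ₐ[ℚ] ℂ, ((σ y).re ^ 2 : ℝ) := by
    rw [Complex.re_sum]
    exact Finset.sum_congr rfl fun σ _ => Complex.ofReal_re _
  rw [h4] at h3
  have h5 : (0 : ℝ) ≤ ∑ σ : K →ₐ[ℚ] ℂ, ((σ y).re ^ 2 : ℝ) :=
    Finset.sum_nonneg fun σ _ => sq_nonneg _
  rw [← h3] at h5
  exact_mod_cast h5

set_option maxHeartbeats 1000000 in
/-- If `K` is a totally real Galois number field of degree `r` over `ℚ` and
`f ∈ ℚ[x₁,…,xₙ]` is a sum of `m` squares in `K[x₁,…,xₙ]`, then `f` is a sum of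
`(4r - 3)·m` squares in `ℚ[x₁,…,xₙ]`. -/
theorem sum_of_squares_descent (K : Type*) [Field K] [NumberField K] [IsGalois ℚ K]
    (htotallyReal : ∀ φ : K →+* ℂ, ∀ x : K, (φ x).im = 0)
    (n m : ℕ) (f : MvPolynomial (Fin n) ℚ)
    (hf : ∃ g : Fin m → MvPolynomial (Fin n) K,
      MvPolynomial.map (algebraMap ℚ K) f = ∑ k, (g k) ^ 2) :
    ∃ h : Fin ((4 * Module.finrank ℚ K - 3) * m) → MvPolynomial (Fin n) ℚ,
      f = ∑ i, (h i) ^ 2 := by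
  classical
  obtain ⟨g, hg⟩ := hf
  set N := Module.finrank ℚ K with hN
  have hN1 : 1 ≤ N := Module.finrank_pos
  set τ : K →ₗ[ℚ] ℚ := (N : ℚ)⁻¹ • (Algebra.trace ℚ K) with hτ
  have hNne : (N : ℚ) ≠ 0 := by positivity
  have hτalg : ∀ q : ℚ, τ (algebraMap ℚ K q) = q := by
    intro q
    rw [hτ]
    simp only [LinearMap.smul_apply, smul_eq_mul]
    rw [Algebra.trace_algebraMap, nsmul_eq_mul, ← hN]
    field_simp
  set B : LinearMap.BilinForm ℚ K := (LinearMap.mul ℚ K).compr₂ τ with hB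
  have hBapp : ∀ x y : K, B x y = τ (x * y) := fun x y => rfl
  have hsymm : ∀ x y, B x y = B y x := by intro x y; rw [hBapp, hBapp, mul_comm]
  have hpsd : ∀ x, 0 ≤ B x x := by
    intro x
    rw [hBapp, hτ]
    simp only [LinearMap.smul_apply, smul_eq_mul]
    exact mul_nonneg (by positivity) (trace_sq_nonneg K htotallyReal x)
  have hone : B 1 1 = 1 := by
    rw [hBapp, mul_one, show (1 : K) = algebraMap ℚ K 1 from (map_one _).symm, hτalg]
  obtain ⟨ℓ, hℓ⟩ := bilin_sos_one B hsymm hpsd 1 hone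
  have key : ∀ (p : MvPolynomial (Fin n) K) (d : Fin n →₀ ℕ),
      τ (MvPolynomial.coeff d (p ^ 2))
        = ∑ j, MvPolynomial.coeff d ((cwMap (ℓ j) p) ^ 2) := by
    intro p d
    rw [pow_two, MvPolynomial.coeff_mul, map_sum]
    have hterm : ∀ x ∈ Finset.HasAntidiagonal.antidiagonal d,
        τ (MvPolynomial.coeff x.1 p * MvPolynomial.coeff x.2 p)
        = ∑ j, MvPolynomial.coeff x.1 (cwMap (ℓ j) p)
            * MvPolynomial.coeff x.2 (cwMap (ℓ j) p) := by
      intro x _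
      rw [← hBapp, hℓ]
      exact Finset.sum_congr rfl fun j _ => by rw [coeff_cwMap, coeff_cwMap]
    rw [Finset.sum_congr rfl hterm, Finset.sum_comm]
    refine Finset.sum_congr rfl fun j _ => ?_
    rw [pow_two, MvPolynomial.coeff_mul]
  have hcard : Fintype.card (Fin ((4 * N - 3) * m))
      = Fintype.card (Option (Fin (N - 1) × Fin 4) × Fin m) := by
    simp only [Fintype.card_fin, Fintype.card_prod, Fintype.card_option]
    have : (N - 1) * 4 + 1 = 4 * N - 3 := by omega
    rw [this]
  set ψ := Fintype.equivOfCardEq hcard with hψ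
  refine ⟨fun i => cwMap (ℓ (ψ i).1) (g (ψ i).2), ?_⟩
  apply MvPolynomial.ext
  intro d
  have h1 := congrArg (MvPolynomial.coeff d) hg
  rw [MvPolynomial.coeff_map, MvPolynomial.coeff_sum] at h1
  calc MvPolynomial.coeff d f
      = τ (algebraMap ℚ K (MvPolynomial.coeff d f)) := (hτalg _).symm
    _ = τ (∑ k, MvPolynomial.coeff d (g k ^ 2)) := by rw [h1]
    _ = ∑ k, τ (MvPolynomial.coeff d (g k ^ 2)) := map_sum τ _ _
    _ = ∑ k, ∑ j, MvPolynomial.coeff d ((cwMap (ℓ j) (g k)) ^ 2) :=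
        Finset.sum_congr rfl fun k _ => key (g k) d
    _ = ∑ j, ∑ k, MvPolynomial.coeff d ((cwMap (ℓ j) (g k)) ^ 2) := Finset.sum_comm
    _ = ∑ p : Option (Fin (N - 1) × Fin 4) × Fin m,
          MvPolynomial.coeff d ((cwMap (ℓ p.1) (g p.2)) ^ 2) :=
        (Fintype.sum_prod_type (f := fun p : Option (Fin (N - 1) × Fin 4) × Fin m =>
          MvPolynomial.coeff d ((cwMap (ℓ p.1) (g p.2)) ^ 2))).symm
    _ = ∑ i, MvPolynomial.coeff d ((cwMap (ℓ (ψ i).1) (g (ψ i).2)) ^ 2) :=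
        (Equiv.sum_comp ψ _).symm
    _ = MvPolynomial.coeff d (∑ i, (cwMap (ℓ (ψ i).1) (g (ψ i).2)) ^ 2) :=
        (MvPolynomial.coeff_sum _ _ _).symm
end

section
/- Let K be a number field that is a Galois extension of ℚ and is totally real, and let r = [K:ℚ]. If a polynomial f ∈ ℚ[x₁,…,xₙ] is a sum of m squares of polynomials in K[x₁,…,xₙ], then f is a sum of 2^{r+1} · (r+1 choose 2) · 4m squares of polynomials in ℚ[x₁,…,xₙ]. -/
open MvPolynomial

/-! Auxiliary machinery: applying an additive map to the coefficients of a
multivariate polynomial. -/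

noncomputable def lmap {σ R S : Type*} [CommSemiring R] [CommSemiring S]
    (L : R →+ S) (p : MvPolynomial σ R) : MvPolynomial σ S :=
  ∑ u ∈ p.support, monomial u (L (p.coeff u))

theorem coeff_lmap {σ R S : Type*} [CommSemiring R] [CommSemiring S]
    (L : R →+ S) (p : MvPolynomial σ R) (u : σ →₀ ℕ) :
    (lmap L p).coeff u = L (p.coeff u) := by
  classical
  rw [lmap, coeff_sum]
  simp_rw [coeff_monomial]
  rw [Finset.sum_ite_eq' p.support u (fun v => L (p.coeff v))]
  split_ifs with h
  · rfl
  · rw [notMem_support_iff.mp h, map_zero]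

theorem lmap_add {σ R S : Type*} [CommSemiring R] [CommSemiring S]
    (L : R →+ S) (p q : MvPolynomial σ R) :
    lmap L (p + q) = lmap L p + lmap L q := by
  ext u; simp [coeff_lmap]

theorem lmap_sum {σ R S ι : Type*} [CommSemiring R] [CommSemiring S]
    (L : R →+ S) (s : Finset ι) (p : ι → MvPolynomial σ R) :
    lmap L (∑ i ∈ s, p i) = ∑ i ∈ s, lmap L (p i) := by
  ext u
  rw [coeff_lmap, coeff_sum, coeff_sum, map_sum]
  exact Finset.sum_congr rfl fun i _ => (coeff_lmap L (p i) u).symm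

theorem lmap_monomial {σ R S : Type*} [CommSemiring R] [CommSemiring S]
    (L : R →+ S) (u : σ →₀ ℕ) (a : R) :
    lmap L (monomial u a) = monomial u (L a) := by
  classical
  ext v; rw [coeff_lmap]; simp only [coeff_monomial]; split_ifs <;> simp

/-- Key bilinear identity lifted to polynomials: if `T (a*b) = ∑ j, L j a * L j b`
holds on coefficients, it holds coefficientwise for products of polynomials. -/
theorem lmap_mul_eq_sum {σ R S ι : Type*} [CommSemiring R] [CommSemiring S] [Fintype ι]
    (T : R →+ S) (L : ι → (R →+ S))
    (hTL : ∀ a b : R, T (a * b) = ∑ j, L j a * L j b)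
    (p q : MvPolynomial σ R) :
    lmap T (p * q) = ∑ j, lmap (L j) p * lmap (L j) q := by
  induction p using MvPolynomial.induction_on' generalizing q with
  | monomial u a =>
    induction q using MvPolynomial.induction_on' with
    | monomial v b =>
      rw [monomial_mul, lmap_monomial, hTL]
      simp_rw [lmap_monomial, monomial_mul, ← map_sum (monomial (u + v))]
    | add q₁ q₂ hq₁ hq₂ =>
      rw [mul_add, lmap_add, hq₁, hq₂, ← Finset.sum_add_distrib]
      simp_rw [lmap_add, mul_add]
  | add p₁ p₂ hp₁ hp₂ =>
    rw [add_mul, lmap_add, hp₁, hp₂, ← Finset.sum_add_distrib]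
    simp_rw [lmap_add, add_mul]

/-- In a totally real number field, the trace of a nonzero square is positive. -/
theorem trace_sq_pos (K : Type*) [Field K] [NumberField K]
    (htotallyReal : ∀ φ : K →+* ℂ, ∀ x : K, (φ x).im = 0)
    {x : K} (hx : x ≠ 0) : 0 < Algebra.trace ℚ K (x * x) := by
  have h1 : algebraMap ℚ ℂ (Algebra.trace ℚ K (x * x)) = ∑ σ : K →ₐ[ℚ] ℂ, σ (x * x) :=
    trace_eq_sum_embeddings ℂ
  have h2 : ∀ σ : K →ₐ[ℚ] ℂ, σ (x * x) = (((σ x).re ^ 2 : ℝ) : ℂ) := by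
    intro σ
    have him : (σ x).im = 0 := htotallyReal σ.toRingHom x
    have : (σ x) = ((σ x).re : ℂ) := Complex.ext rfl (by simp [him])
    rw [map_mul]
    nth_rewrite 1 [this]; nth_rewrite 2 [this]
    push_cast
    ring
  rw [Finset.sum_congr rfl (fun σ _ => h2 σ)] at h1
  rw [← Complex.ofReal_sum] at h1
  have h3 : ((Algebra.trace ℚ K (x * x) : ℚ) : ℝ) = ∑ σ : K →ₐ[ℚ] ℂ, (σ x).re ^ 2 := by
    have := h1
    rw [show (algebraMap ℚ ℂ) (Algebra.trace ℚ K (x * x))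
        = (((Algebra.trace ℚ K (x * x) : ℚ) : ℝ) : ℂ) by push_cast; rfl] at this
    exact_mod_cast this
  have hpos : 0 < ∑ σ : K →ₐ[ℚ] ℂ, (σ x).re ^ 2 := by
    have : Algebra.IsAlgebraic ℚ K := Algebra.IsAlgebraic.of_finite ℚ K
    obtain ⟨σ⟩ : Nonempty (K →ₐ[ℚ] ℂ) := ⟨IsAlgClosed.lift⟩
    refine Finset.sum_pos' (fun i _ => sq_nonneg _) ⟨σ, Finset.mem_univ σ, ?_⟩
    have hσx : σ x ≠ 0 := fun h => hx (by
      have : Function.Injective σ := σ.toRingHom.injective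
      exact this (by simpa using h))
    have him : (σ x).im = 0 := htotallyReal σ.toRingHom x
    have hre : (σ x).re ≠ 0 := fun h => hσx (Complex.ext (by simp [h]) (by simp [him]))
    positivity
  rw [← h3] at hpos
  exact_mod_cast hpos

/-- Lagrange's four-square theorem for positive rationals. -/
theorem rat_four_squares {q : ℚ} (hq : 0 < q) : ∃ a : Fin 4 → ℚ, q = ∑ t, (a t) ^ 2 := by
  obtain ⟨a, b, c, d, habcd⟩ := Nat.sum_four_squares (q.num * q.den).toNat
  refine ⟨![(a : ℚ) / q.den, (b : ℚ) / q.den, (c : ℚ) / q.den, (d : ℚ) / q.den], ?_⟩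
  have hden : (q.den : ℚ) ≠ 0 := by exact_mod_cast q.den_nz
  have hN : ((q.num * q.den).toNat : ℤ) = q.num * q.den :=
    Int.toNat_of_nonneg (by positivity)
  have h1 : ((a : ℚ) ^ 2 + b ^ 2 + c ^ 2 + d ^ 2) = (q.num * q.den : ℤ) := by
    rw [← hN]; exact_mod_cast congrArg (Nat.cast : ℕ → ℚ) habcd
  rw [Fin.sum_univ_four]
  simp only [Matrix.cons_val_zero, Matrix.cons_val_one, Matrix.head_cons,
    Matrix.cons_val_two, Matrix.tail_cons, Matrix.cons_val_three]
  rw [div_pow, div_pow, div_pow, div_pow, ← add_div, ← add_div, ← add_div,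
    h1]
  push_cast
  rw [sq]
  field_simp
  rw [Rat.mul_den_eq_num]

/-- The trace form of a totally real number field is a sum of `4·r` squares of
rational linear forms. -/
theorem exists_trace_forms (K : Type*) [Field K] [NumberField K]
    (htotallyReal : ∀ φ : K →+* ℂ, ∀ x : K, (φ x).im = 0) :
    ∃ L : Fin (Module.finrank ℚ K) × Fin 4 → (K →ₗ[ℚ] ℚ),
      ∀ x y : K, Algebra.trace ℚ K (x * y) = ∑ j, L j x * L j y := by
  classical
  obtain ⟨v, hv⟩ := LinearMap.BilinForm.exists_orthogonal_basis
    (B := Algebra.traceForm ℚ K) (LinearMap.BilinForm.isSymm_iff.1 (Algebra.traceForm_isSymm (R := ℚ) (S := K)))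
  have hw : ∀ i, 0 < Algebra.trace ℚ K (v i * v i) := fun i =>
    trace_sq_pos K htotallyReal (v.ne_zero i)
  choose a ha using fun i => rat_four_squares (hw i)
  refine ⟨fun j => a j.1 j.2 • (v.coord j.1), fun x y => ?_⟩
  have key := LinearMap.BilinForm.sum_repr_mul_repr_mul (B := Algebra.traceForm ℚ K) v x y
  rw [← Algebra.traceForm_apply, ← key]
  rw [Finsupp.sum_fintype _ _ (by intro i; simp), Fintype.sum_prod_type]
  congr 1
  ext i
  rw [Finsupp.sum_fintype _ _ (by intro i; simp)]
  have hortho : ∀ j, j ≠ i → Algebra.traceForm ℚ K (v i) (v j) = 0 := by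
    intro j hj
    exact hv (Ne.symm hj)
  rw [Finset.sum_eq_single i (fun j _ hj => by
      rw [hortho j hj]; simp) (by simp)]
  simp only [LinearMap.smul_apply, Module.Basis.coord_apply, smul_eq_mul, smul_smul, smul_eq_mul]
  rw [Algebra.traceForm_apply, ha i, Finset.mul_sum, Finset.mul_sum]
  exact Finset.sum_congr rfl fun t _ => by ring

/-- Padding a sum of squares with zeros. -/
theorem pad_squares {R : Type*} [CommRing R] {ι : Type*} [Fintype ι] {M : ℕ}
    (hcard : Fintype.card ι ≤ M) (h : ι → R) :
    ∃ h' : Fin M → R, ∑ j, (h' j) ^ 2 = ∑ i, (h i) ^ 2 := by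
  classical
  obtain ⟨e⟩ : Nonempty (ι ↪ Fin M) :=
    Function.Embedding.nonempty_of_card_le (by simpa using hcard)
  refine ⟨Function.extend e h 0, ?_⟩
  rw [← Finset.sum_subset (Finset.subset_univ (Finset.univ.map e))]
  · rw [Finset.sum_map]
    exact Finset.sum_congr rfl fun i _ => by
      rw [e.injective.extend_apply]
  · intro j _ hj
    have : ¬∃ i, e i = j := by
      simpa [Finset.mem_map] using hj
    rw [Function.extend_apply' _ _ _ this]
    simp

/-- Hillar's bound: if `K` is a totally real Galois number field of degree `r` over `ℚ`
and `f ∈ ℚ[x₁,…,xₙ]` is a sum of `m` squares in `K[x₁,…,xₙ]`, then `f` is a sum of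
`2^(r+1) · (r+1 choose 2) · 4m` squares in `ℚ[x₁,…,xₙ]`. -/
theorem sum_of_squares_descent_hillar (K : Type*) [Field K] [NumberField K] [IsGalois ℚ K]
    (htotallyReal : ∀ φ : K →+* ℂ, ∀ x : K, (φ x).im = 0)
    (n m : ℕ) (f : MvPolynomial (Fin n) ℚ)
    (hf : ∃ g : Fin m → MvPolynomial (Fin n) K,
      MvPolynomial.map (algebraMap ℚ K) f = ∑ k, (g k) ^ 2) :
    ∃ h : Fin (2 ^ (Module.finrank ℚ K + 1) * (Module.finrank ℚ K + 1).choose 2 * (4 * m)) →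
        MvPolynomial (Fin n) ℚ,
      f = ∑ i, (h i) ^ 2 := by
  classical
  obtain ⟨g, hg⟩ := hf
  set r := Module.finrank ℚ K with hr_def
  obtain ⟨L, hL⟩ := exists_trace_forms K htotallyReal
  have hr : 0 < r := Module.finrank_pos
  have hrQ : (0 : ℚ) < (r : ℚ) := by exact_mod_cast hr
  have hrQ' : (r : ℚ) ≠ 0 := ne_of_gt hrQ
  obtain ⟨b, hb⟩ := rat_four_squares hrQ
  set T : K →+ ℚ := (Algebra.trace ℚ K).toAddMonoidHom with hT_def
  have hTL : ∀ x y : K, T (x * y) =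
      ∑ j : Fin r × Fin 4, (L j).toAddMonoidHom x * (L j).toAddMonoidHom y := hL
  -- applying the trace coefficientwise to `map f` multiplies `f` by `r`
  have step1 : lmap T (MvPolynomial.map (algebraMap ℚ K) f) = MvPolynomial.C (r : ℚ) * f := by
    ext u
    rw [coeff_lmap, coeff_C_mul, coeff_map]
    show Algebra.trace ℚ K (algebraMap ℚ K (f.coeff u)) = _
    rw [Algebra.trace_algebraMap]
    simp [hr_def, mul_comm]
  -- descent: `r • f` is a sum of `4·r·m` rational squares
  have step2 : MvPolynomial.C (r : ℚ) * f =
      ∑ k, ∑ j : Fin r × Fin 4, (lmap (L j).toAddMonoidHom (g k)) ^ 2 := by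
    rw [← step1, hg, lmap_sum]
    refine Finset.sum_congr rfl fun k _ => ?_
    rw [sq, lmap_mul_eq_sum T _ hTL]
    exact Finset.sum_congr rfl fun j _ => (sq _).symm
  -- divide by `r` using four squares: `16·r·m` squares
  set h0 : Fin 4 × Fin m × (Fin r × Fin 4) → MvPolynomial (Fin n) ℚ := fun i =>
    MvPolynomial.C (b i.1 / r) * lmap (L i.2.2).toAddMonoidHom (g i.2.1) with hh0_def
  have merge : ∑ p : Fin m × (Fin r × Fin 4), (lmap (L p.2).toAddMonoidHom (g p.1)) ^ 2
      = ∑ k, ∑ j : Fin r × Fin 4, (lmap (L j).toAddMonoidHom (g k)) ^ 2 :=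
    Fintype.sum_prod_type _
  have inner : ∀ t : Fin 4, ∑ p : Fin m × (Fin r × Fin 4), (h0 (t, p)) ^ 2
      = MvPolynomial.C ((b t / r) ^ 2) * (MvPolynomial.C (r : ℚ) * f) := by
    intro t
    calc ∑ p : Fin m × (Fin r × Fin 4), (h0 (t, p)) ^ 2
        = ∑ p : Fin m × (Fin r × Fin 4),
          MvPolynomial.C ((b t / r) ^ 2) * (lmap (L p.2).toAddMonoidHom (g p.1)) ^ 2 :=
          Finset.sum_congr rfl fun p _ => by rw [hh0_def, mul_pow, map_pow]
      _ = MvPolynomial.C ((b t / r) ^ 2)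
          * ∑ p : Fin m × (Fin r × Fin 4), (lmap (L p.2).toAddMonoidHom (g p.1)) ^ 2 := by
          rw [Finset.mul_sum]
      _ = MvPolynomial.C ((b t / r) ^ 2) * (MvPolynomial.C (r : ℚ) * f) := by
          rw [merge, ← step2]
  have hdiv : (∑ t, (b t / (r : ℚ)) ^ 2) = 1 / r := by
    simp_rw [div_pow]
    rw [← Finset.sum_div, ← hb, sq]
    field_simp
  have key : ∑ i : Fin 4 × Fin m × (Fin r × Fin 4), (h0 i) ^ 2 = f := by
    calc ∑ i : Fin 4 × Fin m × (Fin r × Fin 4), (h0 i) ^ 2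
        = ∑ t : Fin 4, ∑ p : Fin m × (Fin r × Fin 4), (h0 (t, p)) ^ 2 :=
          Fintype.sum_prod_type _
      _ = ∑ t : Fin 4, MvPolynomial.C ((b t / r) ^ 2) * (MvPolynomial.C (r : ℚ) * f) :=
          Finset.sum_congr rfl fun t _ => inner t
      _ = MvPolynomial.C (∑ t, (b t / (r : ℚ)) ^ 2) * (MvPolynomial.C (r : ℚ) * f) := by
          rw [map_sum, Finset.sum_mul]
      _ = MvPolynomial.C ((1 : ℚ) / r) * (MvPolynomial.C (r : ℚ) * f) := by rw [hdiv]
      _ = f := by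
          rw [← mul_assoc, ← map_mul, one_div, inv_mul_cancel₀ hrQ', map_one, one_mul]
  -- pad to the required number of squares
  have hcard : Fintype.card (Fin 4 × Fin m × (Fin r × Fin 4))
      ≤ 2 ^ (r + 1) * (r + 1).choose 2 * (4 * m) := by
    have c1 : r ≤ (r + 1).choose 2 := by
      rw [Nat.choose_two_right, Nat.add_sub_cancel]
      calc r = 2 * r / 2 := by omega
        _ ≤ (r + 1) * r / 2 := Nat.div_le_div_right (Nat.mul_le_mul_right r (by omega))
    have c2 : 4 ≤ 2 ^ (r + 1) := by
      calc (4 : ℕ) = 2 ^ 2 := rfl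
        _ ≤ 2 ^ (r + 1) := Nat.pow_le_pow_right (by norm_num) (by omega)
    have hcardι : Fintype.card (Fin 4 × Fin m × (Fin r × Fin 4)) = 4 * (m * (r * 4)) := by
      simp
    rw [hcardι]
    calc 4 * (m * (r * 4)) = (4 * r) * (4 * m) := by ring
      _ ≤ (2 ^ (r + 1) * (r + 1).choose 2) * (4 * m) :=
        Nat.mul_le_mul_right _ (Nat.mul_le_mul c2 c1)
  obtain ⟨h', hh'⟩ := pad_squares hcard h0
  exact ⟨h', by rw [hh', key]⟩
end

section
/- Let K be a number field that is a Galois extension of ℚ and is totally real, with r = [K:ℚ]. If f ∈ ℚ[x₁,…,xₙ] is a sum of m squares of polynomials in K[x₁,…,xₙ], then there exist polynomials g₁,…,g_m ∈ ℚ[x₁,…,xₙ], polynomials h₁,…,h_{(r−1)m} ∈ ℚ[x₁,…,xₙ], and strictly positive rational numbers c₁,…,c_{(r−1)m} such that f = Σ_{k=1}^m g_k² + Σ_{j=1}^{(r−1)m} c_j h_j². (That is, f is a positive-rational-weighted sum of r·m squares over ℚ in which at least m of the weights equal 1.) -/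
section Helpers

open Module

variable (K : Type*) [Field K] [NumberField K]

lemma trace_mul_self_pos (htot : ∀ φ : K →+* ℂ, ∀ x : K, (φ x).im = 0)
    (x : K) (hx : x ≠ 0) : 0 < Algebra.trace ℚ K (x * x) := by
  have h := trace_eq_sum_embeddings (E := ℂ) (K := ℚ) (L := K) (x := x * x)
  have h2 : ∀ σ : K →ₐ[ℚ] ℂ, σ (x * x) = (((σ x).re : ℝ) : ℂ) ^ 2 := by
    intro σ
    have him : (σ x).im = 0 := htot σ.toRingHom x
    have : (σ x) = (((σ x).re : ℝ) : ℂ) := by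
      apply Complex.ext <;> simp [him]
    rw [map_mul, this, ← sq]
    norm_num
  rw [Finset.sum_congr rfl (fun σ _ => h2 σ)] at h
  have hcast : (algebraMap ℚ ℂ (Algebra.trace ℚ K (x * x))) =
      ((∑ σ : K →ₐ[ℚ] ℂ, ((σ x).re) ^ 2 : ℝ) : ℂ) := by
    rw [h]; push_cast; ring_nf
  have hreal : ((Algebra.trace ℚ K (x * x) : ℚ) : ℝ) = ∑ σ : K →ₐ[ℚ] ℂ, ((σ x).re) ^ 2 := by
    have := congrArg Complex.re hcast
    simp only [Complex.ofReal_re] at this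
    rw [show ((algebraMap ℚ ℂ) ((Algebra.trace ℚ K) (x*x))).re
        = ((Algebra.trace ℚ K (x*x) : ℚ) : ℝ) by
      simp [eq_ratCast, Complex.ratCast_re]] at this
    exact this
  have hpos : (0:ℝ) < ∑ σ : K →ₐ[ℚ] ℂ, ((σ x).re) ^ 2 := by
    have : Algebra.IsAlgebraic ℚ K := Algebra.IsAlgebraic.of_finite ℚ K
    obtain σ0 : K →ₐ[ℚ] ℂ := IsAlgClosed.lift
    apply Finset.sum_pos' (fun σ _ => sq_nonneg _)
    refine ⟨σ0, Finset.mem_univ _, ?_⟩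
    have hσx : σ0 x ≠ 0 := by
      simpa using (map_ne_zero σ0.toRingHom).mpr hx
    have him : (σ0 x).im = 0 := htot σ0.toRingHom x
    have hre : (σ0 x).re ≠ 0 := by
      intro h0; apply hσx; apply Complex.ext <;> simp [h0, him]
    positivity
  rw [← hreal] at hpos
  exact_mod_cast hpos

lemma exists_diag (htot : ∀ φ : K →+* ℂ, ∀ x : K, (φ x).im = 0) :
    ∃ (L0 : K →ₗ[ℚ] ℚ) (L : Fin (finrank ℚ K - 1) → K →ₗ[ℚ] ℚ)
      (c : Fin (finrank ℚ K - 1) → ℚ),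
      (∀ i, 0 < c i) ∧ (∀ q : ℚ, L0 (algebraMap ℚ K q) = q) ∧
      (∀ x y : K, L0 (x * y) = L0 x * L0 y + ∑ i, c i * (L i x * L i y)) := by
  classical
  have hr0 : 0 < finrank ℚ K := finrank_pos
  set B : LinearMap.BilinForm ℚ K := ((finrank ℚ K : ℚ))⁻¹ • Algebra.traceForm ℚ K with hB
  have hBapp : ∀ x y : K, B x y = ((finrank ℚ K : ℚ))⁻¹ * Algebra.trace ℚ K (x * y) := by
    intro x y; simp [hB, Algebra.traceForm_apply]
  have hBsymm : B.IsSymm := by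
    refine ⟨fun x y => ?_⟩
    simp only [hBapp, RingHom.id_apply]
    rw [mul_comm x y]
  have hBpos : ∀ x : K, x ≠ 0 → 0 < B x x := by
    intro x hx
    rw [hBapp]
    have h1 := trace_mul_self_pos K htot x hx
    have h2 : (0:ℚ) < ((finrank ℚ K : ℚ))⁻¹ := by positivity
    positivity
  have hB11 : B 1 1 = 1 := by
    rw [hBapp, mul_one]
    rw [show (1 : K) = algebraMap ℚ K 1 by simp, Algebra.trace_algebraMap]
    simp
    field_simp
  set φ : K →ₗ[ℚ] ℚ := B 1 with hφ
  have hφ1 : φ 1 = 1 := hB11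
  have hφalg : ∀ q : ℚ, φ (algebraMap ℚ K q) = q := by
    intro q
    have h : algebraMap ℚ K q = q • (1 : K) := by
      rw [Algebra.smul_def, mul_one]
    rw [h, map_smul, hφ1, smul_eq_mul, mul_one]
  set W : Submodule ℚ K := LinearMap.ker φ with hW
  have hrankW : finrank ℚ W = finrank ℚ K - 1 := by
    have hrange : LinearMap.range φ = ⊤ := by
      rw [LinearMap.range_eq_top]
      intro q
      exact ⟨algebraMap ℚ K q, hφalg q⟩
    have h1 := LinearMap.finrank_range_add_finrank_ker φ
    rw [hrange] at h1
    simp only [finrank_top, finrank_self] at h1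
    rw [hW]
    omega
  obtain ⟨w0, hw0⟩ := LinearMap.BilinForm.exists_orthogonal_basis (LinearMap.BilinForm.isSymm_iff.1 (hBsymm.restrict W))
  set e : Fin (finrank ℚ W) ≃ Fin (finrank ℚ K - 1) := finCongr hrankW with he
  set w : Basis (Fin (finrank ℚ K - 1)) ℚ W := w0.reindex e with hww
  have hwapp : ∀ i, w i = w0 (e.symm i) := fun i => w0.reindex_apply e i
  have hwortho : ∀ i j, i ≠ j → B (w i) (w j) = 0 := by
    intro i j hij
    have h := hw0 (show e.symm i ≠ e.symm j from fun h => hij (by simpa using congrArg e h))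
    have h' : B ((w0 (e.symm i)) : K) ((w0 (e.symm j)) : K) = 0 := h
    rw [hwapp, hwapp]
    exact h'
  set M : K →ₗ[ℚ] K := LinearMap.id - (LinearMap.toSpanSingleton ℚ K 1).comp φ with hM
  have hMmem : ∀ x : K, M x ∈ W := by
    intro x
    simp only [hM, LinearMap.sub_apply, LinearMap.id_apply, LinearMap.comp_apply,
      LinearMap.toSpanSingleton_apply, hW, LinearMap.mem_ker, map_sub, map_smul,
      smul_eq_mul]
    rw [hφ1]; ring
  set π : K →ₗ[ℚ] W := M.codRestrict W hMmem with hπ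
  have hπapp : ∀ x : K, ((π x : K)) = x - φ x • (1:K) := by
    intro x
    simp [hπ, hM, LinearMap.codRestrict_apply]
  -- expansion of B on W via the orthogonal basis
  have hsum : ∀ u v : W, B (u : K) (v : K)
      = ∑ i, B (w i) (w i) * (w.repr u i * w.repr v i) := by
    intro u v
    have hBr : ∀ a b : W, (B.restrict W) a b = B (a : K) (b : K) := by
      intro a b; rfl
    rw [← hBr]
    conv_lhs => rw [← w.sum_repr u]
    rw [map_sum, LinearMap.sum_apply]
    refine Finset.sum_congr rfl ?_
    intro i _
    rw [map_smul, LinearMap.smul_apply, smul_eq_mul]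
    conv_lhs => rw [← w.sum_repr v, map_sum]
    rw [Finset.sum_eq_single i]
    · rw [map_smul, smul_eq_mul, hBr]
      ring
    · intro j _ hji
      rw [map_smul, smul_eq_mul, hBr]
      rw [hwortho i j (Ne.symm hji)]
      ring
    · intro hi
      exact absurd (Finset.mem_univ i) hi
  refine ⟨φ, fun i => (w.coord i).comp π, fun i => B (w i) (w i), ?_, hφalg, ?_⟩
  · intro i
    apply hBpos
    have h := w.ne_zero i
    exact fun hc => h (Subtype.coe_injective (by simpa using hc))
  · intro x y
    have hφmul : φ (x * y) = B x y := by
      simp only [hφ, hBapp, one_mul]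
    rw [hφmul]
    have hπker : ∀ z : K, φ ((π z : K)) = 0 := fun z => (hMmem z)
    have hx : x = φ x • (1 : K) + (π x : K) := by rw [hπapp]; abel
    have hy : y = φ y • (1 : K) + (π y : K) := by rw [hπapp]; abel
    have expand : B x y
        = φ x * φ y * B 1 1 + φ x * B 1 (π y : K) + φ y * B (π x : K) 1
          + B (π x : K) (π y : K) := by
      conv_lhs => rw [hx, hy]
      simp only [map_add, LinearMap.add_apply, map_smul, LinearMap.smul_apply, smul_eq_mul]
      ring
    have h1 : B 1 (π y : K) = 0 := hπker y
    have h2 : B (π x : K) 1 = 0 := by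
      have hs := hBsymm.eq (π x : K) 1
      rw [hs]
      exact hπker x
    rw [expand, h1, h2, hB11, hsum (π x) (π y)]
    simp only [LinearMap.comp_apply, Basis.coord_apply]
    ring

open MvPolynomial in
noncomputable def Flin {σ : Type*} (ℓ : K →ₗ[ℚ] ℚ) (p : MvPolynomial σ K) :
    MvPolynomial σ ℚ :=
  AddMonoidAlgebra.map ℓ.toAddMonoidHom p

open MvPolynomial in
lemma coeff_Flin {σ : Type*} (ℓ : K →ₗ[ℚ] ℚ) (p : MvPolynomial σ K) (m : σ →₀ ℕ) :
    coeff m (Flin K ℓ p) = ℓ (coeff m p) := rfl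

open MvPolynomial in
lemma Flin_map {n : ℕ} (ℓ : K →ₗ[ℚ] ℚ) (hℓ : ∀ q : ℚ, ℓ (algebraMap ℚ K q) = q)
    (p : MvPolynomial (Fin n) ℚ) :
    Flin K ℓ (MvPolynomial.map (algebraMap ℚ K) p) = p := by
  apply MvPolynomial.ext
  intro d
  rw [coeff_Flin, coeff_map, hℓ]

open MvPolynomial in
lemma Flin_sum {n m : ℕ} (ℓ : K →ₗ[ℚ] ℚ) (g : Fin m → MvPolynomial (Fin n) K) :
    Flin K ℓ (∑ k, g k) = ∑ k, Flin K ℓ (g k) := by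
  apply MvPolynomial.ext
  intro d
  rw [coeff_Flin, coeff_sum, coeff_sum, map_sum]
  exact Finset.sum_congr rfl fun k _ => (coeff_Flin K ℓ (g k) d).symm

open MvPolynomial in
lemma Flin_sq {n r' : ℕ} (L0 : K →ₗ[ℚ] ℚ) (L : Fin r' → K →ₗ[ℚ] ℚ)
    (c : Fin r' → ℚ)
    (hmul : ∀ x y : K, L0 (x * y) = L0 x * L0 y + ∑ i, c i * (L i x * L i y))
    (g : MvPolynomial (Fin n) K) :
    Flin K L0 (g ^ 2) = (Flin K L0 g) ^ 2 + ∑ i, C (c i) * (Flin K (L i) g) ^ 2 := by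
  classical
  apply MvPolynomial.ext
  intro d
  rw [coeff_add, coeff_sum]
  rw [sq, coeff_Flin, coeff_mul, map_sum]
  have hL0 : ∀ x ∈ Finset.HasAntidiagonal.antidiagonal d,
      L0 (coeff x.1 g * coeff x.2 g)
        = (coeff x.1 (Flin K L0 g) * coeff x.2 (Flin K L0 g))
          + ∑ i, c i * (coeff x.1 (Flin K (L i) g) * coeff x.2 (Flin K (L i) g)) := by
    intro x _
    rw [hmul]
    simp only [coeff_Flin]
  rw [Finset.sum_congr rfl hL0, Finset.sum_add_distrib]
  congr 1
  · rw [sq, coeff_mul]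
  · rw [Finset.sum_comm]
    refine Finset.sum_congr rfl ?_
    intro i _
    rw [coeff_C_mul, sq, coeff_mul, Finset.mul_sum]


end Helpers


open MvPolynomial

/-- If `K` is a totally real Galois number field of degree `r` over `ℚ` and
`f ∈ ℚ[x₁,…,xₙ]` is a sum of `m` squares in `K[x₁,…,xₙ]`, then `f` is a
positive-rational-weighted sum of `r·m` squares over `ℚ` in which at least `m`
of the weights equal `1`:
`f = Σ_{k=1}^m g_k² + Σ_{j=1}^{(r-1)m} c_j h_j²` with `c_j > 0` rational. -/
theorem weighted_sos_descent (K : Type*) [Field K] [NumberField K] [IsGalois ℚ K]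
    (htotallyReal : ∀ φ : K →+* ℂ, ∀ x : K, (φ x).im = 0)
    (n m : ℕ) (f : MvPolynomial (Fin n) ℚ)
    (hf : ∃ g : Fin m → MvPolynomial (Fin n) K,
      MvPolynomial.map (algebraMap ℚ K) f = ∑ k, (g k) ^ 2) :
    ∃ (g : Fin m → MvPolynomial (Fin n) ℚ)
      (h : Fin ((Module.finrank ℚ K - 1) * m) → MvPolynomial (Fin n) ℚ)
      (c : Fin ((Module.finrank ℚ K - 1) * m) → ℚ),
      (∀ j, 0 < c j) ∧
      f = ∑ k, (g k) ^ 2 + ∑ j, C (c j) * (h j) ^ 2 := by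
  classical
  obtain ⟨g0, hg⟩ := hf
  obtain ⟨L0, L, c, hc, hL0alg, hmul⟩ := exists_diag K htotallyReal
  refine ⟨fun k => Flin K L0 (g0 k),
    fun j => Flin K (L (finProdFinEquiv.symm j).1) (g0 (finProdFinEquiv.symm j).2),
    fun j => c (finProdFinEquiv.symm j).1, fun j => hc _, ?_⟩
  have key : f = ∑ k, (Flin K L0 (g0 k)) ^ 2
      + ∑ k, ∑ i, C (c i) * (Flin K (L i) (g0 k)) ^ 2 := by
    calc f = Flin K L0 (MvPolynomial.map (algebraMap ℚ K) f) := (Flin_map K L0 hL0alg f).symm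
    _ = Flin K L0 (∑ k, (g0 k) ^ 2) := by rw [hg]
    _ = ∑ k, Flin K L0 ((g0 k) ^ 2) := Flin_sum K L0 _
    _ = ∑ k, ((Flin K L0 (g0 k)) ^ 2 + ∑ i, C (c i) * (Flin K (L i) (g0 k)) ^ 2) :=
        Finset.sum_congr rfl fun k _ => Flin_sq K L0 L c hmul (g0 k)
    _ = _ := Finset.sum_add_distrib
  rw [key]
  congr 1
  rw [← Equiv.sum_comp (finProdFinEquiv :
        Fin (Module.finrank ℚ K - 1) × Fin m ≃ Fin ((Module.finrank ℚ K - 1) * m))]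
  simp only [Equiv.symm_apply_apply]
  rw [Fintype.sum_prod_type]
  exact Finset.sum_comm
end

section
/- Let d be a positive rational number that is not the square of a rational, and let K = ℚ(√d). Suppose d is a sum of l squares of rational numbers (such l ≤ 4 always exists). If f ∈ ℚ[x₁,…,xₙ] is a sum of m squares of polynomials in K[x₁,…,xₙ], then f is a sum of (1 + l)·m squares of polynomials in ℚ[x₁,…,xₙ]; in particular f is a sum of at most 5m squares in ℚ[x₁,…,xₙ]. -/
open MvPolynomial


lemma aux_span (d : ℚ) (K : Type*) [Field K] [Algebra ℚ K] (s : K)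
    (hs : s ^ 2 = algebraMap ℚ K d) (hgen : Algebra.adjoin ℚ ({s} : Set K) = ⊤)
    (x : K) : ∃ a b : ℚ, x = algebraMap ℚ K a + algebraMap ℚ K b * s := by
  have hx : x ∈ Algebra.adjoin ℚ ({s} : Set K) := hgen ▸ Algebra.mem_top
  induction hx using Algebra.adjoin_induction with
  | mem y hy =>
    rw [Set.mem_singleton_iff] at hy
    exact ⟨0, 1, by simp [hy]⟩
  | algebraMap r => exact ⟨r, 0, by simp⟩
  | add y z _ _ hy hz =>
    obtain ⟨a, b, rfl⟩ := hy; obtain ⟨c, e, rfl⟩ := hz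
    exact ⟨a + c, b + e, by simp [map_add]; ring⟩
  | mul y z _ _ hy hz =>
    obtain ⟨a, b, rfl⟩ := hy; obtain ⟨c, e, rfl⟩ := hz
    refine ⟨a * c + b * e * d, a * e + b * c, ?_⟩
    simp only [map_add, map_mul]
    linear_combination (algebraMap ℚ K b * algebraMap ℚ K e) * hs

lemma aux_indep (d : ℚ) (hdsq : ¬∃ q : ℚ, q ^ 2 = d)
    (K : Type*) [Field K] [Algebra ℚ K] (s : K) (hs : s ^ 2 = algebraMap ℚ K d)
    (a b : ℚ) (h : algebraMap ℚ K a + algebraMap ℚ K b * s = 0) : a = 0 ∧ b = 0 := by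
  have hinj : Function.Injective (algebraMap ℚ K) := (algebraMap ℚ K).injective
  by_cases hb : b = 0
  · subst hb
    simp only [map_zero, zero_mul, add_zero] at h
    exact ⟨hinj (by simpa using h), rfl⟩
  · exfalso
    apply hdsq
    refine ⟨-a / b, ?_⟩
    have hb' : algebraMap ℚ K b ≠ 0 := fun hc => hb (hinj (by simpa using hc))
    have hsval : s = algebraMap ℚ K (-a / b) := by
      rw [map_div₀, eq_div_iff hb', map_neg]
      linear_combination h
    apply hinj
    rw [← hs, hsval, ← map_pow]

lemma aux_decomp (d : ℚ) (K : Type*) [Field K] [Algebra ℚ K] (s : K)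
    (hs : s ^ 2 = algebraMap ℚ K d) (hgen : Algebra.adjoin ℚ ({s} : Set K) = ⊤)
    (n : ℕ) (g : MvPolynomial (Fin n) K) :
    ∃ A B : MvPolynomial (Fin n) ℚ,
      g = MvPolynomial.map (algebraMap ℚ K) A + C s * MvPolynomial.map (algebraMap ℚ K) B := by
  induction g using MvPolynomial.induction_on with
  | C a =>
    obtain ⟨x, y, hxy⟩ := aux_span d K s hs hgen a
    exact ⟨C x, C y, by rw [hxy]; simp only [map_C, map_add, map_mul]; ring⟩
  | add p q hp hq =>
    obtain ⟨A, B, rfl⟩ := hp; obtain ⟨A', B', rfl⟩ := hq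
    exact ⟨A + A', B + B', by simp [map_add]; ring⟩
  | mul_X p i hp =>
    obtain ⟨A, B, rfl⟩ := hp
    exact ⟨A * X i, B * X i, by simp [map_mul, map_X]; ring⟩

lemma aux_sq_add {R : Type*} [CommRing R] {a b : ℕ} {x y : R}
    (hx : ∃ p : Fin a → R, x = ∑ i, p i ^ 2) (hy : ∃ p : Fin b → R, y = ∑ i, p i ^ 2) :
    ∃ p : Fin (a + b) → R, x + y = ∑ i, p i ^ 2 := by
  obtain ⟨p, rfl⟩ := hx; obtain ⟨r, rfl⟩ := hy
  exact ⟨Fin.addCases p r, by rw [Fin.sum_univ_add]; simp⟩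

lemma aux_sq_cast {R : Type*} [CommRing R] {a b : ℕ} {x : R} (hab : a = b)
    (hx : ∃ p : Fin a → R, x = ∑ i, p i ^ 2) : ∃ p : Fin b → R, x = ∑ i, p i ^ 2 := by
  subst hab; exact hx

lemma aux_sq_prod {R : Type*} [CommRing R] {a b : ℕ} (t : Fin a → Fin b → R) :
    ∃ p : Fin (a * b) → R, ∑ i, ∑ k, t i k ^ 2 = ∑ j, p j ^ 2 := by
  refine ⟨fun j => t (finProdFinEquiv.symm j).1 (finProdFinEquiv.symm j).2, ?_⟩
  have h2 : ∑ x : Fin a × Fin b, t x.1 x.2 ^ 2 =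
      ∑ j : Fin (a * b), t (finProdFinEquiv.symm j).1 (finProdFinEquiv.symm j).2 ^ 2 :=
    Fintype.sum_equiv finProdFinEquiv _ _ (fun x => by simp)
  rw [← h2, Fintype.sum_prod_type]

lemma aux_rat_four_sq (d : ℚ) (hd : 0 < d) : ∃ r : Fin 4 → ℚ, d = ∑ i, r i ^ 2 := by
  obtain ⟨a, b, c, e, habce⟩ := Nat.sum_four_squares (d.num.toNat * d.den)
  refine ⟨![(a : ℚ) / d.den, (b : ℚ) / d.den, (c : ℚ) / d.den, (e : ℚ) / d.den], ?_⟩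
  have hden : (d.den : ℚ) ≠ 0 := Nat.cast_ne_zero.mpr d.den_nz
  have hnum : ((d.num.toNat : ℚ)) = (d.num : ℚ) := by
    exact_mod_cast congrArg (Int.cast : ℤ → ℚ) (Int.toNat_of_nonneg (le_of_lt (Rat.num_pos.mpr hd)))
  have hd' : (d.num : ℚ) = d * d.den := by
    exact (Rat.mul_den_eq_num d).symm
  have hcast : ((a : ℚ)) ^ 2 + (b : ℚ) ^ 2 + (c : ℚ) ^ 2 + (e : ℚ) ^ 2
      = (d.num.toNat : ℚ) * d.den := by exact_mod_cast congrArg (Nat.cast : ℕ → ℚ) habce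
  rw [Fin.sum_univ_four]
  simp only [Matrix.cons_val_zero, Matrix.cons_val_one, Matrix.head_cons,
    Matrix.cons_val_two, Matrix.tail_cons, Matrix.cons_val_three]
  rw [hnum, hd'] at hcast
  rw [div_pow, div_pow, div_pow, div_pow, ← add_div, ← add_div,
    ← add_div, hcast]
  rw [eq_div_iff (pow_ne_zero 2 hden)]
  ring

lemma aux_core (d : ℚ) (hdsq : ¬∃ q : ℚ, q ^ 2 = d)
    (l : ℕ) (q : Fin l → ℚ) (hdl : d = ∑ i, (q i) ^ 2)
    (K : Type*) [Field K] [Algebra ℚ K] (s : K) (hs : s ^ 2 = algebraMap ℚ K d)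
    (hgen : Algebra.adjoin ℚ ({s} : Set K) = ⊤)
    (n m : ℕ) (f : MvPolynomial (Fin n) ℚ)
    (hf : ∃ g : Fin m → MvPolynomial (Fin n) K,
      MvPolynomial.map (algebraMap ℚ K) f = ∑ k, (g k) ^ 2) :
    ∃ h : Fin ((1 + l) * m) → MvPolynomial (Fin n) ℚ, f = ∑ i, (h i) ^ 2 := by
  obtain ⟨g, hg⟩ := hf
  choose A B hAB using fun k => aux_decomp d K s hs hgen n (g k)
  have hper : ∀ k, (g k) ^ 2 =
      MvPolynomial.map (algebraMap ℚ K) ((A k) ^ 2 + C d * (B k) ^ 2) +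
      C s * MvPolynomial.map (algebraMap ℚ K) (2 * (A k * B k)) := by
    intro k
    rw [hAB k]
    simp only [map_add, map_mul, map_pow, map_C, map_ofNat]
    rw [← hs, map_pow]
    ring
  have key : MvPolynomial.map (algebraMap ℚ K) f =
      MvPolynomial.map (algebraMap ℚ K) ((∑ k, (A k) ^ 2) + C d * ∑ k, (B k) ^ 2) +
      C s * MvPolynomial.map (algebraMap ℚ K) (∑ k, 2 * (A k * B k)) := by
    rw [hg, Finset.sum_congr rfl fun k _ => hper k]
    simp only [map_add, map_mul, map_pow, map_C, map_sum]
    rw [Finset.sum_add_distrib, Finset.sum_add_distrib, ← Finset.mul_sum, ← Finset.mul_sum]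
  set P : MvPolynomial (Fin n) ℚ := (∑ k, (A k) ^ 2) + C d * ∑ k, (B k) ^ 2 with hP
  have hfP : f = P := by
    apply MvPolynomial.ext
    intro μ
    have h1 := congrArg (coeff μ) key
    rw [coeff_map, coeff_add, coeff_map, coeff_C_mul, coeff_map] at h1
    have h2 := aux_indep d hdsq K s hs (coeff μ f - coeff μ P) (-(coeff μ (∑ k, 2 * (A k * B k))))
      (by simp only [map_sub, map_neg]; linear_combination h1)
    linarith [h2.1]
  have hsum2 : C d * ∑ k, (B k) ^ 2 = ∑ i : Fin l, ∑ k, (C (q i) * B k) ^ 2 := by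
    rw [hdl]
    simp only [map_sum, map_pow, Finset.sum_mul]
    refine Finset.sum_congr rfl fun i _ => ?_
    rw [Finset.mul_sum]
    exact Finset.sum_congr rfl fun k _ => by ring
  apply aux_sq_cast (show m + l * m = (1 + l) * m by ring)
  rw [hfP, hP, hsum2]
  refine aux_sq_add ⟨A, rfl⟩ ?_
  obtain ⟨p, hp⟩ := aux_sq_prod fun i k => C (q i) * B k
  exact ⟨p, hp⟩

/-- Quadratic case, square count: let `d > 0` be rational, not a rational square, with
`d` a sum of `l` rational squares, and let `K = ℚ(√d)`.  If `f ∈ ℚ[x₁,…,xₙ]` is a sum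
of `m` squares in `K[x₁,…,xₙ]`, then `f` is a sum of `(1+l)·m` squares in
`ℚ[x₁,…,xₙ]`; in particular, `f` is a sum of `N ≤ 5m` squares in `ℚ[x₁,…,xₙ]`. -/
theorem quadratic_field_sos_descent (d : ℚ) (hd : 0 < d) (hdsq : ¬∃ q : ℚ, q ^ 2 = d)
    (l : ℕ) (q : Fin l → ℚ) (hdl : d = ∑ i, (q i) ^ 2)
    (K : Type*) [Field K] [Algebra ℚ K] (s : K) (hs : s ^ 2 = algebraMap ℚ K d)
    (hgen : Algebra.adjoin ℚ ({s} : Set K) = ⊤)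
    (n m : ℕ) (f : MvPolynomial (Fin n) ℚ)
    (hf : ∃ g : Fin m → MvPolynomial (Fin n) K,
      MvPolynomial.map (algebraMap ℚ K) f = ∑ k, (g k) ^ 2) :
    (∃ h : Fin ((1 + l) * m) → MvPolynomial (Fin n) ℚ, f = ∑ i, (h i) ^ 2) ∧
    ∃ N : ℕ, N ≤ 5 * m ∧ ∃ h : Fin N → MvPolynomial (Fin n) ℚ, f = ∑ i, (h i) ^ 2 := by

  refine ⟨aux_core d hdsq l q hdl K s hs hgen n m f hf, 5 * m, le_refl _, ?_⟩
  obtain ⟨r, hr⟩ := aux_rat_four_sq d hd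
  exact aux_sq_cast (show (1 + 4) * m = 5 * m by ring)
    (aux_core d hdsq 4 r hr K s hs hgen n m f hf)
end

section
/- Let α be a real root of u(x) = x³ − 3x + 1 (all three roots α, β = 2 − α − α², γ = α² − 2 of u are real), and let K = ℚ(α), a totally real cyclic Galois cubic field. Then in K[x,y] the polynomial f = 3 − 12y − 6x³ + 18y² + 3x⁶ + 12x³y − 6xy³ + 6x²y⁴ (with rational coefficients) satisfies f = (x³ + α²y + βxy² − 1)² + (x³ + β²y + γxy² − 1)² + (x³ + γ²y + αxy² − 1)², i.e., f is a sum of 3 squares of polynomials in K[x,y]. -/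
open MvPolynomial

lemma hillar_key {R : Type*} [CommRing R] (a : R) (ha : a ^ 3 - 3 * a + 1 = 0) :
    (C 3 - C 12 * X 1 - C 6 * (X 0) ^ 3 + C 18 * (X 1) ^ 2 + C 3 * (X 0) ^ 6
        + C 12 * (X 0) ^ 3 * X 1 - C 6 * X 0 * (X 1) ^ 3 + C 6 * (X 0) ^ 2 * (X 1) ^ 4
        : MvPolynomial (Fin 2) R) =
      ((X 0) ^ 3 + C (a ^ 2) * X 1 + C (2 - a - a ^ 2) * X 0 * (X 1) ^ 2 - 1) ^ 2 +
      ((X 0) ^ 3 + C ((2 - a - a ^ 2) ^ 2) * X 1 + C (a ^ 2 - 2) * X 0 * (X 1) ^ 2 - 1) ^ 2 +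
      ((X 0) ^ 3 + C ((a ^ 2 - 2) ^ 2) * X 1 + C a * X 0 * (X 1) ^ 2 - 1) ^ 2 := by
  have hC : (C a : MvPolynomial (Fin 2) R) ^ 3 - 3 * C a + 1 = 0 := by
    have := congrArg (C : R → MvPolynomial (Fin 2) R) ha
    simp only [map_add, map_sub, map_pow, map_mul, map_ofNat, map_one, map_zero] at this
    exact this
  simp only [map_pow, map_sub, map_add, map_mul, map_ofNat, map_one]
  linear_combination
    ((4 : MvPolynomial (Fin 2) R) * X 1 - 14 * (X 1) ^ 2 + 10 * X 0 * (X 1) ^ 3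
        - 2 * (X 0) ^ 2 * (X 1) ^ 4 - 4 * (X 0) ^ 3 * X 1
      + C a * (4 * X 1 - 10 * (X 1) ^ 2 + 6 * X 0 * (X 1) ^ 3
        - 2 * (X 0) ^ 2 * (X 1) ^ 4 - 4 * (X 0) ^ 3 * X 1)
      + (C a) ^ 2 * (10 * (X 1) ^ 2 - 6 * X 0 * (X 1) ^ 3)
      + (C a) ^ 3 * (4 * (X 1) ^ 2 - 2 * X 0 * (X 1) ^ 3)
      - 4 * (C a) ^ 4 * (X 1) ^ 2 - 2 * (C a) ^ 5 * (X 1) ^ 2) * hC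

/-- Let `α` be a real root of `u(x) = x³ − 3x + 1`, with `β = 2 − α − α²` and
`γ = α² − 2` its other roots, and let `K = ℚ(α) ⊆ ℝ`.  Then in `K[x,y]`
(with `x = X 0`, `y = X 1`) the rational polynomial
`f = 3 − 12y − 6x³ + 18y² + 3x⁶ + 12x³y − 6xy³ + 6x²y⁴` equals
`(x³+α²y+βxy²−1)² + (x³+β²y+γxy²−1)² + (x³+γ²y+αxy²−1)²`,
i.e. `f` is a sum of `3` squares in `K[x,y]`. -/
theorem hillar_example_sos_cubic_field (α : ℝ) (hα : α ^ 3 - 3 * α + 1 = 0) :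
    letI K : IntermediateField ℚ ℝ := IntermediateField.adjoin ℚ {α}
    letI a : K := ⟨α, IntermediateField.mem_adjoin_simple_self ℚ α⟩
    letI b : K := 2 - a - a ^ 2
    letI c : K := a ^ 2 - 2
    letI x : MvPolynomial (Fin 2) K := X 0
    letI y : MvPolynomial (Fin 2) K := X 1
    MvPolynomial.map (algebraMap ℚ K)
      (C 3 - C 12 * X 1 - C 6 * (X 0) ^ 3 + C 18 * (X 1) ^ 2 + C 3 * (X 0) ^ 6
        + C 12 * (X 0) ^ 3 * X 1 - C 6 * X 0 * (X 1) ^ 3 + C 6 * (X 0) ^ 2 * (X 1) ^ 4) =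
      (x ^ 3 + C (a ^ 2) * y + C b * x * y ^ 2 - 1) ^ 2 +
      (x ^ 3 + C (b ^ 2) * y + C c * x * y ^ 2 - 1) ^ 2 +
      (x ^ 3 + C (c ^ 2) * y + C a * x * y ^ 2 - 1) ^ 2 := by
  set K : IntermediateField ℚ ℝ := IntermediateField.adjoin ℚ {α}
  set a : K := ⟨α, IntermediateField.mem_adjoin_simple_self ℚ α⟩
  have ha : a ^ 3 - 3 * a + 1 = 0 := by
    apply Subtype.ext
    push_cast
    exact hα
  have hmap : MvPolynomial.map (algebraMap ℚ K)
      (C 3 - C 12 * X 1 - C 6 * (X 0 : MvPolynomial (Fin 2) ℚ) ^ 3 + C 18 * (X 1) ^ 2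
        + C 3 * (X 0) ^ 6 + C 12 * (X 0) ^ 3 * X 1 - C 6 * X 0 * (X 1) ^ 3
        + C 6 * (X 0) ^ 2 * (X 1) ^ 4) =
      (C 3 - C 12 * X 1 - C 6 * (X 0) ^ 3 + C 18 * (X 1) ^ 2 + C 3 * (X 0) ^ 6
        + C 12 * (X 0) ^ 3 * X 1 - C 6 * X 0 * (X 1) ^ 3 + C 6 * (X 0) ^ 2 * (X 1) ^ 4
        : MvPolynomial (Fin 2) K) := by
    simp only [map_sub, map_add, map_mul, map_pow, MvPolynomial.map_C,
      MvPolynomial.map_X, map_ofNat]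
  rw [hmap]
  exact hillar_key a ha
end
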